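/- Let f, g_1, ..., g_r be real polynomials in d variables with f = g_1^2 + ... + g_r^2 and f ≠ 0. Then for every i with g_i ≠ 0, the Newton polytope of g_i is contained in (1/2)·N(f), i.e., N(g_i) ⊆ { v/2 | v ∈ N(f) }. -/

import Mathlib

set_option maxHeartbeats 1000000

open MvPolynomial

/-- The Newton polytope of a polynomial: the convex hull in `ℝ^d` of its support. -/
noncomputable def newtonPolytope {d : ℕ} (f : MvPolynomial (Fin d) ℝ) :
    Set (Fin d → ℝ) :=
  convexHull ℝ ((fun α : Fin d →₀ ℕ => fun i => (α i : ℝ)) '' ↑f.support)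

/-- If `f = g₁² + ⋯ + g_r²` and `f ≠ 0`, then the Newton polytope of each nonzero `gᵢ`
is contained in `(1/2)·N(f)`. -/
theorem newtonPolytope_of_sos {d r : ℕ} (f : MvPolynomial (Fin d) ℝ)
    (g : Fin r → MvPolynomial (Fin d) ℝ)
    (hf : f = ∑ i : Fin r, (g i) ^ 2) (hf0 : f ≠ 0) :
    ∀ i : Fin r, g i ≠ 0 →
      newtonPolytope (g i) ⊆ (fun v => ((1 : ℝ) / 2) • v) '' newtonPolytope f := by
  classical
  set ι : (Fin d →₀ ℕ) → (Fin d → ℝ) := fun α j => (α j : ℝ) with hιdef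
  have ιinj : Function.Injective ι := by
    intro a b hab
    ext j
    have := congrFun hab j
    simp only [hιdef] at this
    exact_mod_cast this
  set S : Set (Fin d → ℝ) := ι '' (⋃ j, ↑(g j).support) with hSdef
  have hSfin : S.Finite := by
    apply Set.Finite.image
    exact Set.finite_iUnion fun j => (g j).support.finite_toSet
  set P : Set (Fin d → ℝ) := convexHull ℝ S with hPdef
  -- extreme points land in the target
  have hext : P.extremePoints ℝ ⊆
      (fun v => ((1 : ℝ) / 2) • v) '' (ι '' ↑f.support) := by
    intro x hx
    have hxS : x ∈ S := extremePoints_convexHull_subset hx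
    obtain ⟨α, hα, rfl⟩ := hxS
    obtain ⟨j, hαj⟩ : ∃ j, α ∈ (g j).support := by
      simpa using hα
    have hkey : ∀ k : Fin r, coeff (α + α) ((g k) ^ 2) = (coeff α (g k)) ^ 2 := by
      intro k
      rw [sq, coeff_mul, Finset.sum_eq_single (α, α)]
      · ring
      · rintro ⟨b₁, b₂⟩ hb hbne
        by_contra h
        have hb1 : b₁ ∈ (g k).support := by
          simp only [mem_support_iff]
          intro h1; exact h (by simp [h1])
        have hb2 : b₂ ∈ (g k).support := by
          simp only [mem_support_iff]
          intro h2; exact h (by simp [h2])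
        have hsum : b₁ + b₂ = α + α := Finset.HasAntidiagonal.mem_antidiagonal.1 hb
        have hS1 : ι b₁ ∈ P := subset_convexHull ℝ S ⟨b₁, Set.mem_iUnion.2 ⟨k, hb1⟩, rfl⟩
        have hS2 : ι b₂ ∈ P := subset_convexHull ℝ S ⟨b₂, Set.mem_iUnion.2 ⟨k, hb2⟩, rfl⟩
        have hmid : ι α ∈ openSegment ℝ (ι b₁) (ι b₂) := by
          refine ⟨1/2, 1/2, by norm_num, by norm_num, by norm_num, ?_⟩
          funext j'
          have hnat : b₁ j' + b₂ j' = α j' + α j' := by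
            have := DFunLike.congr_fun hsum j'
            simpa using this
          have hreal : (b₁ j' : ℝ) + (b₂ j' : ℝ) = (α j' : ℝ) + (α j' : ℝ) := by
            exact_mod_cast hnat
          simp only [Pi.add_apply, Pi.smul_apply, smul_eq_mul, hιdef]
          linarith
        obtain ⟨h1, h2⟩ := (mem_extremePoints.1 hx).2 _ hS1 _ hS2 hmid
        exact hbne (by rw [Prod.ext_iff]; exact ⟨ιinj h1, ιinj h2⟩)
      · intro habs
        simp [Finset.mem_antidiagonal] at habs
    have hcoef : 0 < coeff (α + α) f := by
      rw [hf, coeff_sum]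
      simp only [hkey]
      refine Finset.sum_pos' (fun k _ => sq_nonneg _) ⟨j, Finset.mem_univ j, ?_⟩
      have : coeff α (g j) ≠ 0 := mem_support_iff.1 hαj
      positivity
    have hmem : α + α ∈ f.support := mem_support_iff.2 (ne_of_gt hcoef)
    refine ⟨ι (α + α), ⟨α + α, hmem, rfl⟩, ?_⟩
    funext j'
    simp only [hιdef, Pi.smul_apply, smul_eq_mul, Finsupp.add_apply, Nat.cast_add]
    ring
  intro i hgi
  have hsub : newtonPolytope (g i) ⊆ P := by
    apply convexHull_mono
    apply Set.image_mono
    exact Set.subset_iUnion (fun j => ((g j).support : Set (Fin d →₀ ℕ))) i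
  refine hsub.trans ?_
  set T : Set (Fin d → ℝ) := (fun v => ((1 : ℝ) / 2) • v) '' newtonPolytope f with hTdef
  have hTconv : Convex ℝ T := (convex_convexHull ℝ _).is_linear_image
    (IsLinearMap.isLinearMap_smul (R := ℝ) (M := Fin d → ℝ) ((1 : ℝ) / 2))
  have hTcomp : IsCompact T := by
    apply IsCompact.image _ (continuous_const_smul _)
    exact (Set.Finite.image _ f.support.finite_toSet).isCompact_convexHull ℝ
  have hTclosed : IsClosed T := hTcomp.isClosed
  have hextT : P.extremePoints ℝ ⊆ T := by
    refine hext.trans ?_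
    apply Set.image_mono
    exact subset_convexHull ℝ _
  calc P = closure (convexHull ℝ (P.extremePoints ℝ)) :=
        (closure_convexHull_extremePoints (hSfin.isCompact_convexHull ℝ)
          (convex_convexHull ℝ S)).symm
    _ ⊆ closure T := closure_mono (convexHull_min hextT hTconv)
    _ = T := hTclosed.closure_eq
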